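/- Let p_{XY}, p_{XZ}, p_{YZ} : {−1,1} × {−1,1} → ℝ be nonnegative functions each summing to 1, which are no-signal consistent. Then for every real number t there exists exactly one function μ : {−1,1}³ → ℝ whose three pairwise marginals reproduce p_{XY}, p_{XZ}, p_{YZ} and whose triple correlation satisfies Σ_{(x,y,z)} x·y·z·μ(x,y,z) = t. In particular, there are infinitely many signed solutions μ with the prescribed pairwise marginals, parametrized by the (non-empirical) value t = ⟨XYZ⟩. -/
import Mathlib


/-- The two-point outcome set `{-1, 1}`. -/
abbrev PM : Type := ({-1, 1} : Finset ℤ)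

/-- `-1` as an element of `PM`. -/
def pa : PM := ⟨-1, by decide⟩
/-- `1` as an element of `PM`. -/
def pb : PM := ⟨1, by decide⟩

lemma sumPM (f : PM → ℝ) : ∑ x : PM, f x = f pa + f pb := by
  rw [show (Finset.univ : Finset PM) = {pa, pb} from by decide]
  rw [Finset.sum_pair (by decide)]

lemma paval : ((pa : ℤ) : ℝ) = -1 := by norm_num [pa]
lemma pbval : ((pb : ℤ) : ℝ) = 1 := by norm_num [pb]

lemma casesPM (x : PM) : x = pa ∨ x = pb := by
  obtain ⟨v, hv⟩ := x
  simp only [Finset.mem_insert, Finset.mem_singleton] at hv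
  rcases hv with rfl | rfl
  · left; rfl
  · right; rfl

set_option maxHeartbeats 2000000 in
theorem stmt_8 (pXY pXZ pYZ : PM → PM → ℝ)
    (hXY0 : ∀ x y, 0 ≤ pXY x y) (hXZ0 : ∀ x z, 0 ≤ pXZ x z) (hYZ0 : ∀ y z, 0 ≤ pYZ y z)
    (hXY1 : ∑ x : PM, ∑ y : PM, pXY x y = 1)
    (hXZ1 : ∑ x : PM, ∑ z : PM, pXZ x z = 1)
    (hYZ1 : ∑ y : PM, ∑ z : PM, pYZ y z = 1)
    (hX : ∀ x, ∑ y : PM, pXY x y = ∑ z : PM, pXZ x z)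
    (hY : ∀ y, ∑ x : PM, pXY x y = ∑ z : PM, pYZ y z)
    (hZ : ∀ z, ∑ x : PM, pXZ x z = ∑ y : PM, pYZ y z)
    (t : ℝ) :
    ∃! μ : PM → PM → PM → ℝ,
      (∀ x y, ∑ z : PM, μ x y z = pXY x y) ∧
      (∀ x z, ∑ y : PM, μ x y z = pXZ x z) ∧
      (∀ y z, ∑ x : PM, μ x y z = pYZ y z) ∧
      (∑ x : PM, ∑ y : PM, ∑ z : PM,
        ((x : ℤ) : ℝ) * ((y : ℤ) : ℝ) * ((z : ℤ) : ℝ) * μ x y z = t) := by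
  have hXa := hX pa; have hXb := hX pb
  have hYa := hY pa; have hYb := hY pb
  have hZa := hZ pa; have hZb := hZ pb
  simp only [sumPM] at hXY1 hXZ1 hYZ1 hXa hXb hYa hYb hZa hZb
  refine ⟨fun x y z =>
    (1/8) * (1
      + (pXY pb pa + pXY pb pb - pXY pa pa - pXY pa pb) * ((x : ℤ) : ℝ)
      + (pXY pa pb + pXY pb pb - pXY pa pa - pXY pb pa) * ((y : ℤ) : ℝ)
      + (pXZ pa pb + pXZ pb pb - pXZ pa pa - pXZ pb pa) * ((z : ℤ) : ℝ)
      + (pXY pa pa - pXY pa pb - pXY pb pa + pXY pb pb) * (((x : ℤ) : ℝ) * ((y : ℤ) : ℝ))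
      + (pXZ pa pa - pXZ pa pb - pXZ pb pa + pXZ pb pb) * (((x : ℤ) : ℝ) * ((z : ℤ) : ℝ))
      + (pYZ pa pa - pYZ pa pb - pYZ pb pa + pYZ pb pb) * (((y : ℤ) : ℝ) * ((z : ℤ) : ℝ))
      + t * (((x : ℤ) : ℝ) * ((y : ℤ) : ℝ) * ((z : ℤ) : ℝ))), ⟨?_, ?_, ?_, ?_⟩, ?_⟩
  · intro x y
    rcases casesPM x with rfl | rfl <;> rcases casesPM y with rfl | rfl <;>
      simp only [sumPM, paval, pbval] <;> push_cast <;> linarith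
  · intro x z
    rcases casesPM x with rfl | rfl <;> rcases casesPM z with rfl | rfl <;>
      simp only [sumPM, paval, pbval] <;> push_cast <;> linarith
  · intro y z
    rcases casesPM y with rfl | rfl <;> rcases casesPM z with rfl | rfl <;>
      simp only [sumPM, paval, pbval] <;> push_cast <;> linarith
  · simp only [sumPM, paval, pbval]; push_cast; ring
  · rintro ν ⟨h1, h2, h3, h4⟩
    have e1 := h1 pa pa; have e2 := h1 pa pb; have e3 := h1 pb pa; have e4 := h1 pb pb
    have f1 := h2 pa pa; have f2 := h2 pa pb; have f3 := h2 pb pa; have f4 := h2 pb pb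
    have g1 := h3 pa pa; have g2 := h3 pa pb; have g3 := h3 pb pa; have g4 := h3 pb pb
    simp only [sumPM] at e1 e2 e3 e4 f1 f2 f3 f4 g1 g2 g3 g4 h4
    simp only [paval, pbval] at h4; push_cast at h4
    funext x y z
    rcases casesPM x with rfl | rfl <;> rcases casesPM y with rfl | rfl <;>
      rcases casesPM z with rfl | rfl <;> simp only [paval, pbval] <;> push_cast <;> linarith
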